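/- Let d ≥ 1 be an integer, let a₁ ≥ 1, and let C₀ ≥ 1. For N ≥ 2 and m ∈ ℤ^d, define the function f_m(n) = m · n on the domain D_m = { n ∈ ℤ^d : |n| ≤ C₀ N and |m · n| ≤ C₀ N^{a₁} }. Then there exist a₂ ≥ 1 and C' > 0, depending only on d, a₁, and C₀ (in particular independent of N), such that for every N ≥ 2 there is a set J ⊂ ℤ^d with |J| ≤ C' N^{a₂} with the property that for every m ∈ ℤ^d there exists m₀ ∈ J with D_{m₀} = D_m and m₀ · n = m · n for all n ∈ D_m. -/

import Mathlib

/-- Integer dot product on `ℤ^d`. -/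
def dotZ {d : ℕ} (m n : Fin d → ℤ) : ℤ := ∑ i, m i * n i

/-- Euclidean norm of a lattice point in `ℤ^d`. -/
noncomputable def enormZ {d : ℕ} (n : Fin d → ℤ) : ℝ := Real.sqrt (∑ i, ((n i : ℝ)) ^ 2)

/-- The domain `D_m = { n ∈ ℤ^d : |n| ≤ C₀ N and |m · n| ≤ C₀ N^{a₁} }`. -/
def Dset {d : ℕ} (C₀ N a₁ : ℝ) (m : Fin d → ℤ) : Set (Fin d → ℤ) :=
  {n | enormZ n ≤ C₀ * N ∧ (|dotZ m n| : ℝ) ≤ C₀ * N ^ a₁}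

/-- Coordinatewise cast to `ℚ^d`. -/
def coeQ {d : ℕ} (n : Fin d → ℤ) : Fin d → ℚ := fun i => (n i : ℚ)

lemma dot_cast {d : ℕ} (m n : Fin d → ℤ) :
    ((dotZ m n : ℤ) : ℚ) = ∑ i, (m i : ℚ) * (n i : ℚ) := by
  simp [dotZ]

/-- If `m` and `m'` agree (as functionals) on a family `s`, they agree on the
rational span of `s`. -/
lemma dot_eq_of_span {d : ℕ} (m m' : Fin d → ℤ) (s : Fin d → Fin d → ℤ)
    (hs : ∀ i, dotZ m (s i) = dotZ m' (s i)) (n : Fin d → ℤ)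
    (hn : coeQ n ∈ Submodule.span ℚ (Set.range (coeQ ∘ s))) :
    dotZ m n = dotZ m' n := by
  classical
  set φ : (Fin d → ℚ) →ₗ[ℚ] ℚ :=
    ∑ j, ((m j : ℚ) - (m' j : ℚ)) • LinearMap.proj j with hφdef
  have hφ : ∀ x : Fin d → ℤ, φ (coeQ x) = ((dotZ m x : ℤ) : ℚ) - ((dotZ m' x : ℤ) : ℚ) := by
    intro x
    rw [dot_cast, dot_cast, ← Finset.sum_sub_distrib]
    simp only [hφdef, LinearMap.sum_apply, LinearMap.smul_apply, LinearMap.proj_apply,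
      smul_eq_mul, coeQ]
    exact Finset.sum_congr rfl fun j _ => by ring
  have hker : Submodule.span ℚ (Set.range (coeQ ∘ s)) ≤ LinearMap.ker φ := by
    rw [Submodule.span_le]
    rintro x ⟨i, rfl⟩
    simp only [SetLike.mem_coe, LinearMap.mem_ker, Function.comp_apply]
    rw [hφ, hs i, sub_self]
  have h0 := hker hn
  rw [LinearMap.mem_ker, hφ, sub_eq_zero] at h0
  exact_mod_cast h0

/-- From any set `D` containing `0` one can choose a family of `d` elements of
`D` whose image in `ℚ^d` spans the same subspace as the image of `D`. -/
lemma exists_spanning {d : ℕ} (D : Set (Fin d → ℤ)) (h0 : (0 : Fin d → ℤ) ∈ D) :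
    ∃ s : Fin d → Fin d → ℤ, (∀ i, s i ∈ D) ∧
      Submodule.span ℚ (Set.range (coeQ ∘ s)) = Submodule.span ℚ (coeQ '' D) := by
  classical
  obtain ⟨b, hbsub, hbspan, hbli⟩ := exists_linearIndependent ℚ (coeQ '' D)
  have hfin : b.Finite := hbli.setFinite
  set B := hfin.toFinset with hB
  have hBcoe : (B : Set (Fin d → ℚ)) = b := hfin.coe_toFinset
  have hcard : B.card ≤ d := by
    haveI := hfin.fintype
    have h1 : Fintype.card b ≤ d := by
      simpa [Module.finrank_fin_fun] using hbli.fintype_card_le_finrank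
    rw [hB, Set.Finite.card_toFinset]
    exact h1
  set l := B.toList with hl
  have hlen : l.length ≤ d := by
    rw [hl, Finset.length_toList]; exact hcard
  set f : Fin d → (Fin d → ℚ) :=
    fun i => if h : (i : ℕ) < l.length then l.get ⟨i, h⟩ else 0 with hf
  have hrange_sub : Set.range f ⊆ insert 0 b := by
    rintro x ⟨i, rfl⟩
    by_cases h : (i : ℕ) < l.length
    · have h1 : l.get ⟨i, h⟩ ∈ l := List.get_mem l ⟨i, h⟩
      have h1' : l.get ⟨i, h⟩ ∈ B := Finset.mem_toList.1 h1
      have : l.get ⟨i, h⟩ ∈ b := hfin.mem_toFinset.1 h1'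
      simp only [hf, dif_pos h]
      exact Set.mem_insert_of_mem _ this
    · simp only [hf, dif_neg h]
      exact Set.mem_insert _ _
  have hbsubr : b ⊆ Set.range f := by
    intro x hx
    have hxl : x ∈ l := Finset.mem_toList.2 (hfin.mem_toFinset.2 hx)
    obtain ⟨k, hk⟩ := List.mem_iff_get.1 hxl
    refine ⟨⟨(k : ℕ), lt_of_lt_of_le k.2 hlen⟩, ?_⟩
    simp only [hf]
    rw [dif_pos k.2]
    exact hk
  have hspanf : Submodule.span ℚ (Set.range f) = Submodule.span ℚ b := by
    refine le_antisymm ?_ (Submodule.span_mono hbsubr)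
    calc Submodule.span ℚ (Set.range f) ≤ Submodule.span ℚ (insert 0 b) :=
          Submodule.span_mono hrange_sub
      _ = Submodule.span ℚ b := Submodule.span_insert_zero
  have hmem : ∀ i, ∃ nD, nD ∈ D ∧ coeQ nD = f i := by
    intro i
    rcases hrange_sub ⟨i, rfl⟩ with h | h
    · exact ⟨0, h0, by rw [h]; funext j; simp [coeQ]⟩
    · obtain ⟨nD, hnD, hc⟩ := hbsub h
      exact ⟨nD, hnD, hc⟩
  choose s hsD hsf using hmem
  refine ⟨s, hsD, ?_⟩
  have : coeQ ∘ s = f := funext hsf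
  rw [this, hspanf, hbspan]

theorem stmt17 (d : ℕ) (hd : 1 ≤ d) (a₁ C₀ : ℝ) (ha₁ : 1 ≤ a₁) (hC₀ : 1 ≤ C₀) :
    ∃ a₂ : ℝ, 1 ≤ a₂ ∧ ∃ C' : ℝ, 0 < C' ∧ ∀ N : ℝ, 2 ≤ N →
      ∃ J : Finset (Fin d → ℤ), (J.card : ℝ) ≤ C' * N ^ a₂ ∧
        ∀ m : Fin d → ℤ, ∃ m₀ ∈ J,
          Dset C₀ N a₁ m₀ = Dset C₀ N a₁ m ∧
          ∀ n ∈ Dset C₀ N a₁ m, dotZ m₀ n = dotZ m n := by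
  classical
  have hC₀0 : (0 : ℝ) < C₀ := lt_of_lt_of_le one_pos hC₀
  refine ⟨((d * d : ℕ) : ℝ) + a₁ * (d : ℕ), ?_, (3 * C₀) ^ (d * d + d), by positivity, ?_⟩
  · have h1 : (1 : ℝ) ≤ ((d * d : ℕ) : ℝ) := by
      have : 1 ≤ d * d := Nat.one_le_iff_ne_zero.2 (by positivity)
      exact_mod_cast this
    have h2 : (0 : ℝ) ≤ a₁ * (d : ℕ) := by positivity
    linarith
  intro N hN
  have hN0 : (0 : ℝ) < N := by linarith
  have hN1 : (1 : ℝ) ≤ N := by linarith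
  have hNa : N ≤ N ^ a₁ := by
    calc N = N ^ (1 : ℝ) := (Real.rpow_one N).symm
      _ ≤ N ^ a₁ := Real.rpow_le_rpow_of_exponent_le hN1 ha₁
  have hR1 : (1 : ℝ) ≤ C₀ * N := by nlinarith
  have hT1 : (1 : ℝ) ≤ C₀ * N ^ a₁ := by nlinarith
  set M := ⌊C₀ * N⌋ with hM
  set T' := ⌊C₀ * N ^ a₁⌋ with hT'
  have hM0 : (0 : ℤ) ≤ M := Int.le_floor.2 (by push_cast; linarith)
  have hT'0 : (0 : ℤ) ≤ T' := Int.le_floor.2 (by push_cast; linarith)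
  -- 0 is in every Dset
  have h0D : ∀ m : Fin d → ℤ, (0 : Fin d → ℤ) ∈ Dset C₀ N a₁ m := by
    intro m
    constructor
    · have : enormZ (0 : Fin d → ℤ) = 0 := by simp [enormZ]
      rw [this]; linarith
    · have : dotZ m (0 : Fin d → ℤ) = 0 := by simp [dotZ]
      rw [this]; simp; linarith
  -- choose spanning families
  have hsel := fun m : Fin d → ℤ => exists_spanning (Dset C₀ N a₁ m) (h0D m)
  choose sel hselD hselSpan using hsel
  -- the invariant map
  set Φ : (Fin d → ℤ) → ((Fin d → Fin d → ℤ) × (Fin d → ℤ)) :=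
    fun m => (sel m, fun i => dotZ m (sel m i)) with hΦ
  set P : Finset ((Fin d → Fin d → ℤ) × (Fin d → ℤ)) :=
    (Finset.Icc (fun _ _ => -M) (fun _ _ => M)) ×ˢ (Finset.Icc (fun _ => -T') (fun _ => T'))
    with hP
  -- coordinate bounds
  have coordb : ∀ n : Fin d → ℤ, enormZ n ≤ C₀ * N → ∀ j, -M ≤ n j ∧ n j ≤ M := by
    intro n hn j
    have h1 : (|n j| : ℝ) ≤ enormZ n := by
      have : ((n j : ℝ)) ^ 2 ≤ ∑ i, ((n i : ℝ)) ^ 2 :=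
        Finset.single_le_sum (f := fun i => ((n i : ℝ)) ^ 2)
          (fun i _ => sq_nonneg _) (Finset.mem_univ j)
      have h2 := Real.sqrt_le_sqrt this
      rw [Real.sqrt_sq_eq_abs] at h2
      exact h2
    have habs : (|n j| : ℝ) ≤ C₀ * N := le_trans h1 hn
    have hub : n j ≤ M := Int.le_floor.2 (le_trans (by exact_mod_cast le_abs_self _) habs)
    have hlb : -M ≤ n j := by
      have : -n j ≤ M := Int.le_floor.2 (le_trans (by push_cast; exact neg_le_abs _) habs)
      omega
    exact ⟨hlb, hub⟩
  have hΦP : ∀ m, Φ m ∈ P := by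
    intro m
    rw [hP, Finset.mem_product]
    constructor
    · rw [Finset.mem_Icc]
      constructor <;> (intro i; intro j)
      · exact (coordb (sel m i) (hselD m i).1 j).1
      · exact (coordb (sel m i) (hselD m i).1 j).2
    · rw [Finset.mem_Icc]
      have hb : ∀ i, -T' ≤ dotZ m (sel m i) ∧ dotZ m (sel m i) ≤ T' := by
        intro i
        have habs : (|dotZ m (sel m i)| : ℝ) ≤ C₀ * N ^ a₁ := (hselD m i).2
        have hub : dotZ m (sel m i) ≤ T' :=
          Int.le_floor.2 (le_trans (by exact_mod_cast le_abs_self _) habs)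
        have hlb : -T' ≤ dotZ m (sel m i) := by
          have : -dotZ m (sel m i) ≤ T' :=
            Int.le_floor.2 (le_trans (by push_cast; exact neg_le_abs _) habs)
          omega
        exact ⟨hlb, hub⟩
      constructor <;> (intro i)
      · exact (hb i).1
      · exact (hb i).2
  -- the representative map and the set J
  set rep : ((Fin d → Fin d → ℤ) × (Fin d → ℤ)) → (Fin d → ℤ) :=
    fun p => if h : ∃ m, Φ m = p then h.choose else 0 with hrep
  refine ⟨P.image rep, ?_, ?_⟩
  · -- cardinality bound
    have e1 : (Finset.Icc (fun _ _ => -M) (fun _ _ => M) :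
        Finset (Fin d → Fin d → ℤ)).card = (2 * M + 1).toNat ^ (d * d) := by
      simp only [Pi.card_Icc, Int.card_Icc, Finset.prod_const, Finset.card_univ,
        Fintype.card_fin]
      rw [← pow_mul]
      congr 2
      ring
    have e2 : (Finset.Icc (fun _ => -T') (fun _ => T') :
        Finset (Fin d → ℤ)).card = (2 * T' + 1).toNat ^ d := by
      simp only [Pi.card_Icc, Int.card_Icc, Finset.prod_const, Finset.card_univ,
        Fintype.card_fin]
      congr 2
      ring
    have hcards : (P.image rep).card ≤ (2 * M + 1).toNat ^ (d * d) * (2 * T' + 1).toNat ^ d := by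
      calc (P.image rep).card ≤ P.card := Finset.card_image_le
        _ = _ := by rw [hP, Finset.card_product, e1, e2]
    have b1 : (((2 * M + 1).toNat : ℕ) : ℝ) ≤ 3 * (C₀ * N) := by
      have h := Int.toNat_of_nonneg (by omega : (0 : ℤ) ≤ 2 * M + 1)
      have h2 : (((2 * M + 1).toNat : ℕ) : ℝ) = ((2 * M + 1 : ℤ) : ℝ) := by exact_mod_cast h
      rw [h2]
      have hMle : (M : ℝ) ≤ C₀ * N := by rw [hM]; exact Int.floor_le _
      push_cast
      linarith
    have b2 : (((2 * T' + 1).toNat : ℕ) : ℝ) ≤ 3 * (C₀ * N ^ a₁) := by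
      have h := Int.toNat_of_nonneg (by omega : (0 : ℤ) ≤ 2 * T' + 1)
      have h2 : (((2 * T' + 1).toNat : ℕ) : ℝ) = ((2 * T' + 1 : ℤ) : ℝ) := by exact_mod_cast h
      rw [h2]
      have hTle : (T' : ℝ) ≤ C₀ * N ^ a₁ := by rw [hT']; exact Int.floor_le _
      push_cast
      linarith
    have hnn1 : (0 : ℝ) ≤ (((2 * M + 1).toNat : ℕ) : ℝ) := by positivity
    have hnn2 : (0 : ℝ) ≤ (((2 * T' + 1).toNat : ℕ) : ℝ) := by positivity
    calc ((P.image rep).card : ℝ)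
        ≤ ((((2 * M + 1).toNat : ℕ) : ℝ)) ^ (d * d) * ((((2 * T' + 1).toNat : ℕ) : ℝ)) ^ d := by
          exact_mod_cast Nat.cast_le.2 hcards |>.trans_eq (by push_cast; ring)
      _ ≤ (3 * (C₀ * N)) ^ (d * d) * (3 * (C₀ * N ^ a₁)) ^ d := by gcongr
      _ = (3 * C₀) ^ (d * d + d) * (N ^ ((d * d : ℕ) : ℝ) * (N ^ a₁) ^ (d : ℕ)) := by
          rw [Real.rpow_natCast, pow_add]
          ring
      _ = (3 * C₀) ^ (d * d + d) * N ^ (((d * d : ℕ) : ℝ) + a₁ * (d : ℕ)) := by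
          congr 1
          rw [← Real.rpow_natCast (N ^ a₁) d, ← Real.rpow_mul hN0.le,
            ← Real.rpow_add hN0]
      _ = _ := rfl
  · -- the covering property
    intro m
    have hex : ∃ m', Φ m' = Φ m := ⟨m, rfl⟩
    have hmem : rep (Φ m) ∈ P.image rep := Finset.mem_image_of_mem rep (hΦP m)
    set m₀ := rep (Φ m) with hm₀
    have hΦeq : Φ m₀ = Φ m := by
      rw [hm₀, hrep]
      simp only [dif_pos hex]
      exact hex.choose_spec
    have hsfst : sel m₀ = sel m := congrArg Prod.fst hΦeq
    have hdot : ∀ i, dotZ m₀ (sel m i) = dotZ m (sel m i) := by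
      intro i
      have := congrFun (congrArg Prod.snd hΦeq) i
      simpa only [hΦ, hsfst] using this
    have agree : ∀ n ∈ Dset C₀ N a₁ m, dotZ m₀ n = dotZ m n := by
      intro n hn
      refine dot_eq_of_span m₀ m (sel m) hdot n ?_
      rw [hselSpan m]
      exact Submodule.subset_span ⟨n, hn, rfl⟩
    have agree' : ∀ n ∈ Dset C₀ N a₁ m₀, dotZ m₀ n = dotZ m n := by
      intro n hn
      refine dot_eq_of_span m₀ m (sel m) hdot n ?_
      have hsp := hselSpan m₀
      rw [hsfst] at hsp
      rw [hsp]
      exact Submodule.subset_span ⟨n, hn, rfl⟩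
    refine ⟨m₀, hmem, ?_, agree⟩
    ext n
    constructor
    · intro hn
      refine ⟨hn.1, ?_⟩
      rw [← agree' n hn]
      exact hn.2
    · intro hn
      refine ⟨hn.1, ?_⟩
      rw [agree n hn]
      exact hn.2
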